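/- The function η_N(x) = π^{−n/2} L_{M−1}^{(n/2)}(|x|²) e^{−|x|²}, N = 2M, admits the representation η_N(x) = π^{−n/2} Σ_{j=0}^{M−1} ((−1)^j/(j! 4^j)) Δ^j e^{−|x|²}. -/

import Mathlib

/-- The generalized Laguerre polynomial
`L_k^{(γ)}(x) = ∑_{i=0}^k (-1)^i binom(k+γ, k-i) x^i / i!`. -/
noncomputable def genLaguerre (k : ℕ) (γ : ℂ) (x : ℂ) : ℂ :=
  ∑ i ∈ Finset.range (k + 1),
    ((-1) ^ i / (Nat.factorial i : ℂ)) *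
      ((∏ m ∈ Finset.range (k - i), (γ + i + 1 + m)) / (Nat.factorial (k - i) : ℂ)) * x ^ i

/-- The Laplacian on `ℝⁿ`. -/
noncomputable def laplacian {n : ℕ} (f : EuclideanSpace ℝ (Fin n) → ℂ) :
    EuclideanSpace ℝ (Fin n) → ℂ := fun x =>
  ∑ i : Fin n,
    iteratedFDeriv ℝ 2 f x ![EuclideanSpace.single i (1 : ℝ), EuclideanSpace.single i (1 : ℝ)]

/-- The generating function `η_{2M}(x) = π^{-n/2} L_{M-1}^{(n/2)}(|x|²) e^{-|x|²}`. -/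
noncomputable def etaFun (n M : ℕ) (x : EuclideanSpace ℝ (Fin n)) : ℂ :=
  (Real.pi : ℂ) ^ (-(n : ℂ) / 2) * genLaguerre (M - 1) ((n : ℂ) / 2) ((‖x‖ : ℂ) ^ 2) *
    Complex.exp (-(‖x‖ : ℂ) ^ 2)

open Polynomial Finset


noncomputable def lagC (k : ℕ) (γ : ℂ) (i : ℕ) : ℂ :=
  (-1) ^ i / (Nat.factorial i : ℂ) *
    ((∏ m ∈ Finset.range (k - i), (γ + i + 1 + m)) / (Nat.factorial (k - i) : ℂ))

noncomputable def Lag (k : ℕ) (γ : ℂ) : Polynomial ℂ :=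
  ∑ i ∈ Finset.range (k + 1), C (lagC k γ i) * X ^ i

noncomputable def Tp (c : ℂ) (P : Polynomial ℂ) : Polynomial ℂ :=
  4 * X * (P.derivative.derivative - 2 * P.derivative + P) + C c * (P.derivative - P)

lemma Lag_zero (γ : ℂ) : Lag 0 γ = 1 := by
  simp [Lag, lagC, Nat.factorial]

lemma prod_shift (c : ℂ) (r : ℕ) :
    ∏ m ∈ Finset.range (r+1), (c + ↑m) = c * ∏ m ∈ Finset.range r, (c + 1 + ↑m) := by
  rw [Finset.prod_range_succ' (fun m : ℕ => c + (m:ℂ))]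
  have h : ∀ m ∈ Finset.range r, (c + ((m:ℕ)+1 : ℕ)) = c + 1 + (m:ℂ) := by
    intro m _; push_cast; ring
  rw [Finset.prod_congr rfl h]
  push_cast; ring

lemma fact_ne (r : ℕ) : ((Nat.factorial r : ℂ)) ≠ 0 :=
  Nat.cast_ne_zero.mpr (Nat.factorial_ne_zero r)

lemma fact_succ (r : ℕ) : ((Nat.factorial (r+1) : ℂ)) = ((r:ℂ)+1) * Nat.factorial r := by
  push_cast [Nat.factorial_succ]; ring

lemma frac_clear (s P F1 F2 : ℂ) (h1 : F1 ≠ 0) (h2 : F2 ≠ 0) :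
    (F1 * F2) * (s / F1 * (P / F2)) = s * P := by
  field_simp

lemma lagC_pascal (γ : ℂ) (k i : ℕ) (hik : i ≤ k) :
    lagC (k + 1) γ i = lagC k γ i + lagC (k + 1) (γ - 1) i := by
  obtain ⟨r, rfl⟩ := Nat.exists_eq_add_of_le hik
  have h1 : i + r + 1 - i = r + 1 := by omega
  have h2 : i + r - i = r := by omega
  rw [lagC, lagC, lagC, h1, h2]
  have hp1 : (∏ m ∈ Finset.range (r + 1), (γ + i + 1 + m))
      = (∏ m ∈ Finset.range r, (γ + i + 1 + m)) * (γ + i + 1 + r) :=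
    Finset.prod_range_succ _ _
  have hp2 : (∏ m ∈ Finset.range (r + 1), (γ - 1 + i + 1 + m))
      = (∏ m ∈ Finset.range r, (γ + i + 1 + m)) * (γ + i) := by
    rw [Finset.prod_range_succ' (fun m => (γ - 1 + i + 1 + m))]
    push_cast
    ring_nf
  rw [hp1, hp2]
  rw [fact_succ r]
  have hfr := fact_ne r
  have hfi := fact_ne i
  have hr1 : ((r:ℂ)+1) ≠ 0 := Nat.cast_add_one_ne_zero r
  field_simp
  ring

lemma Lag_pascal (γ : ℂ) (k : ℕ) : Lag (k + 1) γ = Lag k γ + Lag (k + 1) (γ - 1) := by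
  unfold Lag
  rw [Finset.sum_range_succ (fun i => C (lagC (k+1) γ i) * X ^ i),
    Finset.sum_range_succ (fun i => C (lagC (k+1) (γ-1) i) * X ^ i)]
  have htop : lagC (k+1) γ (k+1) = lagC (k+1) (γ-1) (k+1) := by
    simp [lagC]
  rw [htop]
  have hmain : ∑ i ∈ Finset.range (k+1), C (lagC (k+1) γ i) * X ^ i
      = ∑ i ∈ Finset.range (k+1), C (lagC k γ i) * X ^ i
        + ∑ i ∈ Finset.range (k+1), C (lagC (k+1) (γ-1) i) * X ^ i := by
    rw [← Finset.sum_add_distrib]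
    refine Finset.sum_congr rfl fun i hi => ?_
    rw [lagC_pascal γ k i (by simpa [Nat.lt_succ_iff] using hi)]
    rw [C_add]; ring
  rw [hmain]; ring

lemma Lag_sum (γ : ℂ) (k : ℕ) :
    ∑ l ∈ Finset.range (k + 1), Lag l (γ - 1) = Lag k γ := by
  induction k with
  | zero => simp [Lag_zero]
  | succ k ih => rw [Finset.sum_range_succ, ih, ← Lag_pascal]

lemma derivative_sum_C_X (N : ℕ) (a : ℕ → ℂ) (hN : a (N + 1) = 0) :
    (∑ i ∈ Finset.range (N + 1), C (a i) * X ^ i).derivative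
      = ∑ i ∈ Finset.range (N + 1), C ((i + 1) * a (i + 1)) * X ^ i := by
  rw [derivative_sum]
  have h1 : ∀ i : ℕ, ((C (a i) * X ^ i).derivative : Polynomial ℂ)
      = C ((i : ℂ) * a i) * X ^ (i - 1) := by
    intro i
    rw [derivative_C_mul, derivative_X_pow]
    rw [C_mul]; ring
  simp only [h1]
  rw [Finset.sum_range_succ' (fun i => C ((i : ℂ) * a i) * X ^ (i - 1))]
  rw [Finset.sum_range_succ (fun i => C (((i : ℂ) + 1) * a (i + 1)) * X ^ i)]
  simp only [Nat.cast_zero, zero_mul, map_zero, zero_mul, hN, mul_zero, add_zero]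
  refine Finset.sum_congr rfl fun i _ => ?_
  push_cast
  simp

set_option maxHeartbeats 1000000 in
lemma scalar_main_gen (β : ℂ) (i e : ℕ) :
    4*((((i:ℂ))+1) * (((↑(i+1):ℂ)+1) * (lagC (i+2+e) β (i+1+1))) - 2*((((i:ℂ))+1) * (lagC (i+2+e) β (i+1))) + lagC (i+2+e) β i)
      + 4*(β+1)*((((↑(i+1):ℂ))+1) * (lagC (i+2+e) β (i+1+1)) - (lagC (i+2+e) β (i+1)))
      = -4*(((i+2+e:ℕ):ℂ)+1) * lagC (i+2+e+1) β (i+1) := by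
  have c2 : ∀ r : ℕ, ∏ x ∈ Finset.range r, (β + ((i:ℂ)+1) + 1 + ↑x)
      = ∏ x ∈ Finset.range r, (β + (i:ℂ) + 2 + ↑x) :=
    fun r => Finset.prod_congr rfl fun m _ => by ring
  have c3 : ∀ r : ℕ, ∏ x ∈ Finset.range r, (β + ((i:ℂ)+1+1) + 1 + ↑x)
      = ∏ x ∈ Finset.range r, (β + (i:ℂ) + 3 + ↑x) :=
    fun r => Finset.prod_congr rfl fun m _ => by ring
  have c23 : ∀ r : ℕ, ∏ x ∈ Finset.range r, (β + (i:ℂ) + 2 + 1 + ↑x)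
      = ∏ x ∈ Finset.range r, (β + (i:ℂ) + 3 + ↑x) :=
    fun r => Finset.prod_congr rfl fun m _ => by ring
  have c12 : ∀ r : ℕ, ∏ x ∈ Finset.range r, (β + (i:ℂ) + 1 + 1 + ↑x)
      = ∏ x ∈ Finset.range r, (β + (i:ℂ) + 2 + ↑x) :=
    fun r => Finset.prod_congr rfl fun m _ => by ring
  set Q : ℂ := ∏ x ∈ Finset.range e, (β+(i:ℂ)+3+↑x) with hQ
  have hP0 : ∏ x ∈ Finset.range (e+2), (β + (i:ℂ) + 1 + ↑x)
      = (β+(i:ℂ)+1) * ((β+(i:ℂ)+2) * Q) := by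
    rw [show e+2 = (e+1)+1 by rfl, prod_shift (β+(i:ℂ)+1) (e+1), c12,
      prod_shift (β+(i:ℂ)+2) e, c23]
  have hP1 : ∏ x ∈ Finset.range (e+1), (β + ((i:ℂ)+1) + 1 + ↑x)
      = (β+(i:ℂ)+2) * Q := by
    rw [c2, prod_shift (β+(i:ℂ)+2) e, c23]
  have hPR : ∏ x ∈ Finset.range (e+2), (β + ((i:ℂ)+1) + 1 + ↑x)
      = (β+(i:ℂ)+2) * (Q * (β+(i:ℂ)+3+(e:ℂ))) := by
    rw [c2, show e+2 = (e+1)+1 by rfl, prod_shift (β+(i:ℂ)+2) (e+1), c23,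
      Finset.prod_range_succ]
  have hA0 : (↑i.factorial * ((((e:ℂ))+1+1)*((((e:ℂ))+1)*↑e.factorial))) * lagC (i+2+e) β i
      = (-1)^i * ((β+(i:ℂ)+1) * ((β+(i:ℂ)+2) * Q)) := by
    rw [show (((e:ℂ))+1+1)*((((e:ℂ))+1)*↑e.factorial) = ((Nat.factorial (e+2) : ℂ)) by
      rw [show e+2 = (e+1)+1 by rfl, fact_succ (e+1), fact_succ e]; push_cast; ring]
    simp only [lagC, show i+2+e-i = e+2 by omega]
    rw [frac_clear _ _ _ _ (fact_ne i) (fact_ne (e+2))]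
    push_cast
    rw [hP0]
  have hA1 : (((((i:ℂ))+1)*↑i.factorial) * ((((e:ℂ))+1)*↑e.factorial)) * lagC (i+2+e) β (i+1)
      = -(-1)^i * ((β+(i:ℂ)+2) * Q) := by
    rw [show (((i:ℂ))+1)*↑i.factorial = ((Nat.factorial (i+1) : ℂ)) from (fact_succ i).symm,
      show (((e:ℂ))+1)*↑e.factorial = ((Nat.factorial (e+1) : ℂ)) from (fact_succ e).symm]
    simp only [lagC, show i+2+e-(i+1) = e+1 by omega]
    rw [frac_clear _ _ _ _ (fact_ne (i+1)) (fact_ne (e+1))]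
    push_cast
    rw [hP1]
    ring
  have hA2 : ((((((i:ℂ))+1)+1)*((((i:ℂ))+1)*↑i.factorial)) * ↑e.factorial) * lagC (i+2+e) β (i+1+1)
      = (-1)^i * Q := by
    rw [show ((((i:ℂ))+1)+1)*((((i:ℂ))+1)*↑i.factorial) = ((Nat.factorial (i+1+1) : ℂ)) by
      rw [show i+1+1 = (i+1)+1 by rfl, fact_succ (i+1), fact_succ i]; push_cast; ring]
    simp only [lagC, show i+2+e-(i+1+1) = e by omega]
    rw [frac_clear _ _ _ _ (fact_ne (i+1+1)) (fact_ne e)]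
    push_cast
    rw [c3]
    ring
  have hA1' : (((((i:ℂ))+1)*↑i.factorial) * ((((e:ℂ))+1+1)*((((e:ℂ))+1)*↑e.factorial))) * lagC (i+2+e+1) β (i+1)
      = -(-1)^i * ((β+(i:ℂ)+2) * (Q * (β+(i:ℂ)+3+(e:ℂ)))) := by
    rw [show (((i:ℂ))+1)*↑i.factorial = ((Nat.factorial (i+1) : ℂ)) from (fact_succ i).symm,
      show (((e:ℂ))+1+1)*((((e:ℂ))+1)*↑e.factorial) = ((Nat.factorial (e+2) : ℂ)) by
        rw [show e+2 = (e+1)+1 by rfl, fact_succ (e+1), fact_succ e]; push_cast; ring]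
    simp only [lagC, show i+2+e+1-(i+1) = e+2 by omega]
    rw [frac_clear _ _ _ _ (fact_ne (i+1)) (fact_ne (e+2))]
    push_cast
    rw [hPR]
    ring
  have hM : ((((i:ℂ))+1+1)*((((i:ℂ))+1)*↑i.factorial) * ((((e:ℂ))+1+1)*((((e:ℂ))+1)*↑e.factorial))) ≠ 0 := by
    have n1 := fact_ne e; have n2 := fact_ne i
    have n3 : ((e:ℂ)+1) ≠ 0 := Nat.cast_add_one_ne_zero e
    have n4 : ((i:ℂ)+1) ≠ 0 := Nat.cast_add_one_ne_zero i
    have n5 : ((e:ℂ)+1+1) ≠ 0 := by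
      have := Nat.cast_add_one_ne_zero (e+1) (R := ℂ); push_cast at this; exact this
    have n6 : ((i:ℂ)+1+1) ≠ 0 := by
      have := Nat.cast_add_one_ne_zero (i+1) (R := ℂ); push_cast at this; exact this
    exact mul_ne_zero (mul_ne_zero n6 (mul_ne_zero n4 n2)) (mul_ne_zero n5 (mul_ne_zero n3 n1))
  apply mul_left_cancel₀ hM
  push_cast
  linear_combination (4*((i:ℂ)+1+1)*((i:ℂ)+1)) * hA0
    + (-(8*((i:ℂ)+1)+4*(β+1)) * (((i:ℂ)+1+1)*((e:ℂ)+1+1))) * hA1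
    + (4*((i:ℂ)+1+1)*(β+(i:ℂ)+2)*(((e:ℂ)+1+1)*((e:ℂ)+1))) * hA2
    + (4*((i:ℂ)+(e:ℂ)+3)*((i:ℂ)+1+1)) * hA1'

lemma scalar_head (β : ℂ) (j : ℕ) (A0 A1 B0 : ℂ)
    (h0 : A0 = lagC j β 0)
    (h1 : A1 = if 0+1 ≤ j then lagC j β (0+1) else 0)
    (hB : B0 = lagC (j+1) β 0) :
    4*(β+1) * ((((0:ℕ):ℂ)+1) * A1 - A0) = -4*((j:ℂ)+1) * B0 := by
  subst h0 h1 hB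
  cases j with
  | zero =>
    norm_num [lagC]
  | succ k =>
    rw [if_pos (by omega : 0+1 ≤ k+1)]
    simp only [lagC, show k+1-(0+1) = k by omega, show k+1-0 = k+1 by omega,
      show k+1+1-0 = k+2 by omega]
    norm_num
    rw [prod_shift (β+1) k, prod_shift (β+1) (k+1), Finset.prod_range_succ]
    rw [fact_succ (k+1), fact_succ k]
    push_cast
    have h1 := fact_ne k
    have h2 : ((k:ℂ)+1) ≠ 0 := Nat.cast_add_one_ne_zero k
    have h3 : ((k:ℂ)+1+1) ≠ 0 := by
      have := Nat.cast_add_one_ne_zero (k+1) (R := ℂ); push_cast at this; exact this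
    field_simp
    ring

lemma scalar_main (β : ℂ) (j i : ℕ) (hij : i ≤ j) (A0 A1 A2 A1' : ℂ)
    (h0 : A0 = lagC j β i)
    (h1 : A1 = if i+1 ≤ j then lagC j β (i+1) else 0)
    (h2 : A2 = if i+1+1 ≤ j then lagC j β (i+1+1) else 0)
    (h3 : A1' = lagC (j+1) β (i+1)) :
    4*((((i:ℂ))+1) * (((↑(i+1):ℂ)+1) * A2) - 2*((((i:ℂ))+1) * A1) + A0)
      + 4*(β+1)*((((↑(i+1):ℂ))+1) * A2 - A1)
      = -4*((j:ℂ)+1) * A1' := by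
  subst h0 h1 h2 h3
  obtain ⟨d, rfl⟩ := Nat.exists_eq_add_of_le hij
  rcases d with _ | (_ | e)
  · -- d = 0
    rw [if_neg (by omega : ¬ (i+1 ≤ i+0)), if_neg (by omega : ¬ (i+1+1 ≤ i+0))]
    simp only [lagC, show i+0-i = 0 by omega, show i+0+1-(i+1) = 0 by omega]
    norm_num
    rw [show i+0+1 = i+1 by rfl, fact_succ i]
    have h1 := fact_ne i
    have h2 : ((i:ℂ)+1) ≠ 0 := Nat.cast_add_one_ne_zero i
    field_simp
    ring
  · -- d = 1
    rw [if_pos (by omega : i+1 ≤ i+1), if_neg (by omega : ¬ (i+1+1 ≤ i+1))]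
    simp only [lagC, show i+1-i = 1 by omega, show i+1-(i+1) = 0 by omega,
      show i+1+1-(i+1) = 1 by omega]
    norm_num [Finset.prod_range_one]
    rw [fact_succ i]
    have h1 := fact_ne i
    have h2 : ((i:ℂ)+1) ≠ 0 := Nat.cast_add_one_ne_zero i
    field_simp
    ring
  · -- d = e + 2
    rw [show i + (e+1+1) = i+2+e by omega]
    rw [if_pos (by omega : i+1 ≤ i+2+e), if_pos (by omega : i+1+1 ≤ i+2+e)]
    exact scalar_main_gen β i e
lemma Tp_Lag (β : ℂ) (j : ℕ) :
    Tp (4*(β+1)) (Lag j β) = C (-4*((j:ℂ)+1)) * Lag (j+1) β := by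
  classical
  set c : ℂ := 4*(β+1) with hc
  set a : ℕ → ℂ := fun i => if i ≤ j then lagC j β i else 0 with ha
  set a₁ : ℕ → ℂ := fun i => ((i:ℂ)+1) * a (i+1) with ha₁
  set a₂ : ℕ → ℂ := fun i => ((i:ℂ)+1) * a₁ (i+1) with ha₂
  have haj1 : a (j+1) = 0 := by
    have : ¬ (j+1 ≤ j) := by omega
    simp [ha, this]
  have haj2 : a (j+1+1) = 0 := by
    have : ¬ (j+1+1 ≤ j) := by omega
    simp [ha, this]
  have ha₁j1 : a₁ (j+1) = 0 := by rw [ha₁]; simp only [haj2, mul_zero]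
  have hP : Lag j β = ∑ i ∈ Finset.range (j+1), C (a i) * X ^ i := by
    refine Finset.sum_congr rfl fun i hi => ?_
    rw [ha]; simp only [if_pos (by simpa [Nat.lt_succ_iff] using hi)]
  have hD1 : (Lag j β).derivative = ∑ i ∈ Finset.range (j+1), C (a₁ i) * X ^ i := by
    rw [hP, derivative_sum_C_X j a haj1]
  have hD2 : (Lag j β).derivative.derivative
      = ∑ i ∈ Finset.range (j+1), C (a₂ i) * X ^ i := by
    rw [hD1, derivative_sum_C_X j a₁ ha₁j1]
  have e1 : (4 * X : Polynomial ℂ) *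
      ((Lag j β).derivative.derivative - 2 * (Lag j β).derivative + Lag j β)
      = ∑ i ∈ Finset.range (j+1), C (4*(a₂ i - 2*a₁ i + a i)) * X ^ (i+1) := by
    rw [hD2, hD1, hP]
    simp only [Finset.mul_sum]
    rw [← Finset.sum_sub_distrib, ← Finset.sum_add_distrib]
    simp only [Finset.mul_sum]
    refine Finset.sum_congr rfl fun i _ => ?_
    simp only [C_mul, C_sub, C_add, map_ofNat]
    ring
  have e2 : (C c : Polynomial ℂ) * ((Lag j β).derivative - Lag j β)
      = ∑ i ∈ Finset.range (j+1), C (c*(a₁ i - a i)) * X ^ i := by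
    rw [hD1, hP, ← Finset.sum_sub_distrib]
    simp only [Finset.mul_sum]
    refine Finset.sum_congr rfl fun i _ => ?_
    simp only [C_mul, C_sub]
    ring
  have e3 : ∑ i ∈ Finset.range (j+1), C (c*(a₁ i - a i)) * X ^ i
      = (∑ i ∈ Finset.range (j+1), C (c*(a₁ (i+1) - a (i+1))) * X ^ (i+1))
        + C (c*(a₁ 0 - a 0)) := by
    rw [Finset.sum_range_succ' (fun i => C (c*(a₁ i - a i)) * X ^ i),
      Finset.sum_range_succ (fun i => C (c*(a₁ (i+1) - a (i+1))) * X ^ (i+1))]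
    rw [haj1, ha₁j1]
    simp
  have hR : C (-4*((j:ℂ)+1)) * Lag (j+1) β
      = (∑ i ∈ Finset.range (j+1), C (-4*((j:ℂ)+1) * lagC (j+1) β (i+1)) * X ^ (i+1))
        + C (-4*((j:ℂ)+1) * lagC (j+1) β 0) := by
    rw [Lag]
    simp only [Finset.mul_sum]
    rw [Finset.sum_range_succ' (fun i => C (-4*((j:ℂ)+1)) * (C (lagC (j+1) β i) * X ^ i))]
    simp only [← C_mul, pow_zero, mul_one, ← mul_assoc]
  rw [Tp, e1, e2, e3, hR]
  have hfin : (∑ i ∈ Finset.range (j+1), C (4*(a₂ i - 2*a₁ i + a i)) * X ^ (i+1))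
      + (∑ i ∈ Finset.range (j+1), C (c*(a₁ (i+1) - a (i+1))) * X ^ (i+1))
      = ∑ i ∈ Finset.range (j+1), C (-4*((j:ℂ)+1) * lagC (j+1) β (i+1)) * X ^ (i+1) := by
    rw [← Finset.sum_add_distrib]
    refine Finset.sum_congr rfl fun i hi => ?_
    have hij : i ≤ j := by simpa [Nat.lt_succ_iff] using hi
    rw [← add_mul, ← C_add]
    congr 1
    rw [C_inj]
    simp only [ha₂, ha₁, ha, if_pos hij, hc]
    linear_combination scalar_main β j i hij _ _ _ _ rfl rfl rfl rfl
  have hhead : c*(a₁ 0 - a 0) = -4*((j:ℂ)+1) * lagC (j+1) β 0 := by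
    simp only [ha₁, ha, if_pos (Nat.zero_le j), hc]
    linear_combination scalar_head β j _ _ _ rfl rfl rfl
  rw [hhead, ← hfin]
  ring

lemma Tp_C_mul (c u : ℂ) (P : Polynomial ℂ) : Tp c (C u * P) = C u * Tp c P := by
  simp only [Tp, derivative_C_mul]
  ring

lemma Tp_iter (β : ℂ) (j : ℕ) :
    (Tp (4*(β+1)))^[j] (1 : Polynomial ℂ)
      = C ((-4)^j * (Nat.factorial j : ℂ)) * Lag j β := by
  induction j with
  | zero => simp [Lag_zero]
  | succ j ih =>
    rw [Function.iterate_succ_apply', ih, Tp_C_mul, Tp_Lag β j, ← mul_assoc, ← C_mul]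
    congr 2
    push_cast [Nat.factorial_succ, pow_succ]
    ring

noncomputable def FP (P : Polynomial ℂ) (t : ℝ) : ℂ :=
  P.eval (t:ℂ) * Complex.exp (-(t:ℂ))

lemma hasDerivAt_FP (P : Polynomial ℂ) (t : ℝ) :
    HasDerivAt (FP P) (FP (P.derivative - P) t) t := by
  have hp : HasDerivAt (fun z : ℂ => P.eval z) (P.derivative.eval (t:ℂ)) (t:ℂ) :=
    P.hasDerivAt _
  have he : HasDerivAt (fun z : ℂ => Complex.exp (-z)) (-Complex.exp (-(t:ℂ))) (t:ℂ) := by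
    have h2 := (Complex.hasDerivAt_exp (-(t:ℂ))).comp (t:ℂ) (hasDerivAt_neg (t:ℂ))
    exact h2.congr_deriv (by ring)
  have h1 : HasDerivAt (fun z : ℂ => P.eval z * Complex.exp (-z))
      (FP (P.derivative - P) t) ((t:ℝ):ℂ) := by
    have := hp.mul he
    refine this.congr_deriv ?_
    simp [FP]
    ring
  exact h1.comp_ofReal

section E

variable {n : ℕ}

lemma hq (x : EuclideanSpace ℝ (Fin n)) :
    HasFDerivAt (fun y : EuclideanSpace ℝ (Fin n) => ‖y‖^2)
      ((2:ℝ) • innerSL ℝ x) x := by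
  have := (hasFDerivAt_id x).norm_sq
  refine this.congr_fderiv ?_
  ext v
  simp [two_smul]

lemma hasFDerivAt_fP (P : Polynomial ℂ) (x : EuclideanSpace ℝ (Fin n)) :
    HasFDerivAt (fun y : EuclideanSpace ℝ (Fin n) => FP P (‖y‖^2))
      (((2:ℝ) • innerSL ℝ x).smulRight (FP (P.derivative - P) (‖x‖^2))) x := by
  have h1 := (hasDerivAt_FP P (‖x‖^2)).hasFDerivAt
  have h2 := h1.comp x (hq x)
  refine h2.congr_fderiv ?_
  ext v
  simp
  ring

noncomputable def Lmap (n : ℕ) :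
    EuclideanSpace ℝ (Fin n) →L[ℝ] (EuclideanSpace ℝ (Fin n) →L[ℝ] ℂ) :=
  LinearMap.toContinuousLinearMap
  { toFun := fun v => ((2:ℝ) • innerSL ℝ v).smulRight (1:ℂ)
    map_add' := by
      intro v w; ext u
      simp [inner_add_left, add_smul, mul_add]
    map_smul' := by
      intro r v; ext u
      simp [real_inner_smul_left, smul_smul]
      ring }

lemma Lmap_apply (v u : EuclideanSpace ℝ (Fin n)) :
    Lmap n v u = ((2 * (inner ℝ v u : ℝ) : ℝ) : ℂ) := by
  simp [Lmap, Complex.real_smul]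

lemma fderiv_fP (P : Polynomial ℂ) :
    fderiv ℝ (fun y : EuclideanSpace ℝ (Fin n) => FP P (‖y‖^2))
      = fun y => FP (P.derivative - P) (‖y‖^2) • Lmap n y := by
  funext y
  rw [(hasFDerivAt_fP P y).fderiv]
  ext u
  simp [Lmap_apply, Complex.real_smul]
  ring

lemma hasFDerivAt_D1 (Q : Polynomial ℂ) (x : EuclideanSpace ℝ (Fin n)) :
    HasFDerivAt (fun y : EuclideanSpace ℝ (Fin n) => FP Q (‖y‖^2) • Lmap n y)
      (FP Q (‖x‖^2) • (Lmap n)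
        + (((2:ℝ) • innerSL ℝ x).smulRight
            (FP (Q.derivative - Q) (‖x‖^2))).smulRight (Lmap n x)) x :=
  (hasFDerivAt_fP Q x).smul (Lmap n).hasFDerivAt

lemma norm_sq_sum (x : EuclideanSpace ℝ (Fin n)) : ∑ i : Fin n, (x i)^2 = ‖x‖^2 := by
  have h : (0:ℝ) ≤ ∑ i : Fin n, ‖x i‖ ^ 2 := by positivity
  rw [EuclideanSpace.norm_eq, Real.sq_sqrt h]
  simp [Real.norm_eq_abs, sq_abs]

lemma lap_fP (P : Polynomial ℂ) :
    laplacian (fun y : EuclideanSpace ℝ (Fin n) => FP P (‖y‖^2))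
      = fun y => FP (Tp (2*(n:ℂ)) P) (‖y‖^2) := by
  funext x
  set Q : Polynomial ℂ := P.derivative - P with hQdef
  set Q₂ : Polynomial ℂ := Q.derivative - Q with hQ2def
  have main : ∀ i : Fin n,
      iteratedFDeriv ℝ 2 (fun y : EuclideanSpace ℝ (Fin n) => FP P (‖y‖^2)) x
        ![EuclideanSpace.single i (1 : ℝ), EuclideanSpace.single i (1 : ℝ)]
      = 2 * FP Q (‖x‖^2) + 4 * ((x i : ℝ):ℂ)^2 * FP Q₂ (‖x‖^2) := by
    intro i
    rw [iteratedFDeriv_two_apply]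
    simp only [Matrix.cons_val_zero, Matrix.cons_val_one, Matrix.head_cons]
    rw [fderiv_fP P]
    rw [(hasFDerivAt_D1 Q x).fderiv]
    simp only [ContinuousLinearMap.add_apply, ContinuousLinearMap.smul_apply,
      ContinuousLinearMap.smulRight_apply, ContinuousLinearMap.coe_smul',
      Pi.smul_apply, innerSL_apply_apply]
    rw [Lmap_apply, Lmap_apply]
    simp [EuclideanSpace.inner_single_right, EuclideanSpace.single_apply,
      Complex.real_smul, smul_eq_mul]
    push_cast
    ring
  have hsum : ∑ i : Fin n, ((x i : ℝ):ℂ)^2 = ((‖x‖^2 : ℝ) : ℂ) := by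
    rw [← norm_sq_sum x]
    push_cast
    rfl
  rw [laplacian, Finset.sum_congr rfl (fun i _ => main i), Finset.sum_add_distrib,
    Finset.sum_const, Finset.card_univ, Fintype.card_fin]
  have h2 : ∑ i : Fin n, 4 * ((x i:ℝ):ℂ)^2 * FP Q₂ (‖x‖^2)
      = 4 * ((‖x‖^2:ℝ):ℂ) * FP Q₂ (‖x‖^2) := by
    rw [← Finset.sum_mul, ← Finset.mul_sum, hsum]
  rw [h2, nsmul_eq_mul]
  simp only [FP, Tp, hQ2def, hQdef, derivative_sub, eval_add, eval_mul, eval_sub, eval_ofNat, eval_C, eval_X]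
  ring

end E


lemma genLaguerre_eq (k : ℕ) (γ w : ℂ) : genLaguerre k γ w = (Lag k γ).eval w := by
  rw [genLaguerre, Lag, eval_finset_sum]
  refine Finset.sum_congr rfl fun i _ => ?_
  simp only [eval_mul, eval_C, eval_pow, eval_X, lagC]

lemma FP_C_mul (u : ℂ) (P : Polynomial ℂ) (t : ℝ) : FP (C u * P) t = u * FP P t := by
  simp [FP, mul_assoc]

lemma FP_sum (s : Finset ℕ) (f : ℕ → Polynomial ℂ) (t : ℝ) :
    ∑ j ∈ s, FP (f j) t = FP (∑ j ∈ s, f j) t := by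
  simp [FP, eval_finset_sum, Finset.sum_mul]

lemma gauss_eq (n : ℕ) : (fun y : EuclideanSpace ℝ (Fin n) => Complex.exp (-(‖y‖:ℂ)^2))
    = fun y => FP 1 (‖y‖^2) := by
  funext y
  simp only [FP, eval_one, one_mul]
  congr 1
  push_cast
  ring

lemma lap_iter (n j : ℕ) :
    laplacian^[j] (fun y : EuclideanSpace ℝ (Fin n) => FP (1:Polynomial ℂ) (‖y‖^2))
      = fun y => FP ((Tp (2*(n:ℂ)))^[j] 1) (‖y‖^2) := by
  induction j with
  | zero => simp
  | succ j ih => rw [Function.iterate_succ_apply', ih, lap_fP, Function.iterate_succ_apply']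

/-- `η_{2M}(x) = π^{-n/2} ∑_{j=0}^{M-1} ((-1)^j/(j! 4^j)) Δ^j e^{-|x|²}`. -/
theorem stmt8 (n M : ℕ) (hM : 1 ≤ M) (x : EuclideanSpace ℝ (Fin n)) :
    etaFun n M x =
      (Real.pi : ℂ) ^ (-(n : ℂ) / 2) *
        ∑ j ∈ Finset.range M,
          ((-1) ^ j / ((Nat.factorial j : ℂ) * 4 ^ j)) *
            (laplacian^[j] (fun y : EuclideanSpace ℝ (Fin n) => Complex.exp (-(‖y‖ : ℂ) ^ 2))) x := by
  obtain ⟨k, rfl⟩ : ∃ k, M = k + 1 := ⟨M - 1, by omega⟩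
  rw [etaFun, mul_assoc]
  congr 1
  rw [gauss_eq n]
  simp only [lap_iter n]
  have hc : (2*(n:ℂ)) = 4*(((n:ℂ)/2 - 1)+1) := by ring
  have hz : ((‖x‖:ℂ))^2 = ((‖x‖^2:ℝ):ℂ) := by push_cast; ring
  have hstep : ∀ j, ((-1:ℂ)^j / ((Nat.factorial j : ℂ) * 4^j))
      * FP ((Tp (2*(n:ℂ)))^[j] 1) (‖x‖^2) = FP (Lag j ((n:ℂ)/2 - 1)) (‖x‖^2) := by
    intro j
    rw [hc, Tp_iter ((n:ℂ)/2 - 1) j, FP_C_mul, ← mul_assoc]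
    have h4 : ((4:ℂ))^j ≠ 0 := pow_ne_zero _ (by norm_num)
    have hf := fact_ne j
    have hcoef : ((-1:ℂ)^j / ((Nat.factorial j : ℂ) * 4^j)) * ((-4)^j * (Nat.factorial j : ℂ)) = 1 := by
      rw [show ((-4):ℂ) = (-1) * 4 by norm_num, mul_pow]
      have hm1 : ((-1:ℂ))^j * (-1:ℂ)^j = 1 := by rw [← mul_pow]; norm_num
      field_simp
      linear_combination hm1
    rw [hcoef, one_mul]
  rw [Finset.sum_congr rfl fun j _ => hstep j]
  rw [FP_sum]
  rw [Lag_sum ((n:ℂ)/2) k]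
  rw [show k + 1 - 1 = k by omega]
  rw [genLaguerre_eq, FP, hz]
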